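/- Let the discrete-time LTI system x(k+1) = A x(k) + B u(k), y(k) = C x(k) with A ∈ ℝ^{n×n}, B ∈ ℝ^{n×q}, C ∈ ℝ^{p×n} have (A, B) controllable. Let (u^d, y^d) be a length-T input/output trajectory of the system and let L ≥ 1 with L + n ≤ T. If u^d is Hankel exciting of order L + n, then for every length-L input/output trajectory (u, y) of the system there exists a vector g ∈ ℝ^{T−L+1} such that 𝓗_L(u^d) g = col(u) and 𝓗_L(y^d) g = col(y). -/

import Mathlib

open Matrix

/-- The block Hankel matrix of depth `k` of a signal `ω : {0,…,T−1} → ℝ^q`: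
its `(i,j)` block entry (for `i < k`, `j < T−k+1`) is the vector `ω(i+j) ∈ ℝ^q`. -/
noncomputable def hankelMat {q : ℕ} (T : ℕ) (ω : Fin T → Fin q → ℝ) (k : ℕ) :
    Matrix (Fin k × Fin q) (Fin (T - k + 1)) ℝ := fun r c =>
  if h : (r.1 : ℕ) + (c : ℕ) < T then ω ⟨(r.1 : ℕ) + (c : ℕ), h⟩ r.2 else 0

/-- A signal is Hankel exciting of order `k` if its depth-`k` block Hankel matrix
has full row rank `q·k`. -/
def HankelExciting {q : ℕ} (T : ℕ) (ω : Fin T → Fin q → ℝ) (k : ℕ) : Prop :=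
  (hankelMat T ω k).rank = q * k

/-- The controllability matrix `[B, AB, …, A^{n−1}B]`. -/
noncomputable def ctrbMat {n : ℕ} {ι : Type} [Fintype ι]
    (A : Matrix (Fin n) (Fin n) ℝ) (B : Matrix (Fin n) ι ℝ) :
    Matrix (Fin n) (Fin n × ι) ℝ :=
  Matrix.of fun i p => (A ^ (p.1 : ℕ) * B) i p.2

/-- The pair `(A, B)` is controllable if the controllability matrix has rank `n`. -/
def Controllable {n : ℕ} {ι : Type} [Fintype ι]
    (A : Matrix (Fin n) (Fin n) ℝ) (B : Matrix (Fin n) ι ℝ) : Prop :=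
  (ctrbMat A B).rank = n

/-- `(u, y)` is a length-`L` input/output trajectory of the LTI system
`x(k+1) = A x(k) + B u(k)`, `y(k) = C x(k)`. -/
def IsTraj {n q p : ℕ} (A : Matrix (Fin n) (Fin n) ℝ) (B : Matrix (Fin n) (Fin q) ℝ)
    (C : Matrix (Fin p) (Fin n) ℝ) (L : ℕ)
    (u : Fin L → Fin q → ℝ) (y : Fin L → Fin p → ℝ) : Prop :=
  ∃ x : Fin (L + 1) → Fin n → ℝ,
    ∀ k : Fin L, x k.succ = A *ᵥ x k.castSucc + B *ᵥ u k ∧ y k = C *ᵥ x k.castSucc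

/-- `col(u)`: the column vector obtained by stacking `u(0), …, u(L−1)`. -/
def colVec {L q : ℕ} (u : Fin L → Fin q → ℝ) : Fin L × Fin q → ℝ := fun r => u r.1 r.2

open Finset

lemma aux_vecMul_inj {α β : Type} [Fintype α] [Fintype β] [DecidableEq α]
    (M : Matrix α β ℝ) (h : M.rank = Fintype.card α) :
    ∀ v : α → ℝ, v ᵥ* M = 0 → v = 0 := by
  intro v hv
  have hker : v ∈ LinearMap.ker (Mᵀ.mulVecLin) := by
    simp [Matrix.mulVecLin_apply, Matrix.mulVec_transpose, hv]
  have hrank : Mᵀ.rank = Fintype.card α := by rw [Matrix.rank_transpose]; exact h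
  have h1 : Module.finrank ℝ (LinearMap.range (Mᵀ.mulVecLin)) = Fintype.card α := hrank
  have h2 := LinearMap.finrank_range_add_finrank_ker (Mᵀ.mulVecLin)
  rw [h1] at h2
  have h3 : Module.finrank ℝ (α → ℝ) = Fintype.card α := Module.finrank_fintype_fun_eq_card ℝ
  rw [h3] at h2
  have h4 : Module.finrank ℝ (LinearMap.ker (Mᵀ.mulVecLin)) = 0 := by omega
  rw [Submodule.finrank_eq_zero] at h4
  rw [h4] at hker
  simpa using hker


lemma aux_surj {α β : Type} [Fintype α] [Fintype β] [DecidableEq α] [DecidableEq β]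
    (M : Matrix α β ℝ) (h : ∀ v : α → ℝ, v ᵥ* M = 0 → v = 0) (w : α → ℝ) :
    ∃ g : β → ℝ, M *ᵥ g = w := by
  have hker : LinearMap.ker (Mᵀ.mulVecLin) = ⊥ := by
    rw [LinearMap.ker_eq_bot']
    intro v hv
    apply h
    simpa [Matrix.mulVecLin_apply, Matrix.mulVec_transpose] using hv
  have hinj : Function.Injective (Mᵀ.mulVecLin) := LinearMap.ker_eq_bot.mp hker
  have h1 : Module.finrank ℝ (LinearMap.range (Mᵀ.mulVecLin)) = Fintype.card α := by
    rw [LinearMap.finrank_range_of_inj hinj, Module.finrank_fintype_fun_eq_card]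
  have hrank : M.rank = Fintype.card α := by rw [← Matrix.rank_transpose]; exact h1
  have h2 : Module.finrank ℝ (LinearMap.range (M.mulVecLin)) = Module.finrank ℝ (α → ℝ) := by
    rw [Module.finrank_fintype_fun_eq_card]; exact hrank
  have h3 : LinearMap.range (M.mulVecLin) = ⊤ := Submodule.eq_top_of_finrank_eq h2
  have : w ∈ LinearMap.range (M.mulVecLin) := by rw [h3]; trivial
  obtain ⟨g, hg⟩ := this
  exact ⟨g, hg⟩

lemma state_reach {n q : ℕ} (A : Matrix (Fin n) (Fin n) ℝ) (B : Matrix (Fin n) (Fin q) ℝ)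
    (T : ℕ) (X : ℕ → Fin n → ℝ) (U : ℕ → Fin q → ℝ)
    (hrec : ∀ j < T, X (j + 1) = A *ᵥ X j + B *ᵥ U j) :
    ∀ i j, j + i ≤ T →
      X (j + i) = (A ^ i) *ᵥ X j + ∑ m ∈ range i, (A ^ (i - 1 - m) * B) *ᵥ U (j + m) := by
  intro i
  induction i with
  | zero => intro j hj; simp
  | succ i ih =>
    intro j hj
    have h1 : j + i < T := by omega
    have h2 : j + (i + 1) = (j + i) + 1 := by omega
    rw [h2, hrec _ h1, ih j (by omega)]
    have hA : A *ᵥ (A ^ i *ᵥ X j) = A ^ (i+1) *ᵥ X j := by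
      rw [Matrix.mulVec_mulVec, ← pow_succ']
    have h3 : A *ᵥ ∑ m ∈ range i, (A ^ (i - 1 - m) * B) *ᵥ U (j + m)
        = ∑ m ∈ range i, (A ^ (i + 1 - 1 - m) * B) *ᵥ U (j + m) := by
      have hms := map_sum (A.mulVecLin) (fun m => (A ^ (i - 1 - m) * B) *ᵥ U (j + m)) (range i)
      simp only [Matrix.mulVecLin_apply] at hms
      rw [hms]
      apply Finset.sum_congr rfl
      intro m hm
      simp only [Finset.mem_range] at hm
      rw [Matrix.mulVec_mulVec, ← Matrix.mul_assoc, ← pow_succ']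
      have he : i - 1 - m + 1 = i + 1 - 1 - m := by omega
      rw [he]
    rw [Matrix.mulVec_add, hA, h3, Finset.sum_range_succ]
    have h4 : (A ^ (i + 1 - 1 - i) * B) *ᵥ U (j + i) = B *ᵥ U (j + i) := by
      simp
    rw [h4]
    abel

lemma fin_prod_sum_eq {L q : ℕ} (v : Fin L × Fin q → ℝ) (F : ℕ → Fin q → ℝ) :
    ∑ r : Fin L × Fin q, v r * F (r.1 : ℕ) r.2
      = ∑ b ∈ range L, if h : b < L then ∑ s, v (⟨b, h⟩, s) * F b s else 0 := by
  rw [Fintype.sum_prod_type,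
    ← Fin.sum_univ_eq_sum_range (fun b => if h : b < L then ∑ s, v (⟨b, h⟩, s) * F b s else 0) L]
  apply Finset.sum_congr rfl
  intro b _
  rw [dif_pos b.isLt]

lemma sum_mulVec' {α β : Type} [Fintype β] {m : ℕ} (t : Finset α)
    (M : α → Matrix (Fin m) β ℝ) (v : β → ℝ) :
    (∑ k ∈ t, M k) *ᵥ v = ∑ k ∈ t, (M k *ᵥ v) := by
  ext i
  simp only [Matrix.mulVec, dotProduct, Matrix.sum_apply, Finset.sum_mul,
    Finset.sum_apply]
  exact Finset.sum_comm

lemma dot_sum' {α : Type} {m : ℕ} (t : Finset α) (η : Fin m → ℝ)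
    (w : α → Fin m → ℝ) : η ⬝ᵥ (∑ k ∈ t, w k) = ∑ k ∈ t, η ⬝ᵥ w k := by
  simp only [dotProduct, Finset.sum_apply, Finset.mul_sum]
  exact Finset.sum_comm

/-- The auxiliary row vector `θ_k` (as a function of block index `b ∈ ℕ`). -/
noncomputable def thetaK {n q L : ℕ} (A : Matrix (Fin n) (Fin n) ℝ) (B : Matrix (Fin n) (Fin q) ℝ)
    (ξ : Fin L × Fin q → ℝ) (η : Fin n → ℝ) (k b : ℕ) (s : Fin q) : ℝ :=
  if b < k then (η ᵥ* (A ^ (k - 1 - b) * B)) s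
  else if h2 : b - k < L then ξ (⟨b - k, h2⟩, s) else 0

lemma kernel_triv {n q : ℕ} (A : Matrix (Fin n) (Fin n) ℝ) (B : Matrix (Fin n) (Fin q) ℝ)
    (hctrb : Controllable A B)
    (T : ℕ) (Xd : ℕ → Fin n → ℝ) (Ud : ℕ → Fin q → ℝ)
    (hrec : ∀ j < T, Xd (j + 1) = A *ᵥ Xd j + B *ᵥ Ud j)
    (L : ℕ) (hL : 1 ≤ L) (hLT : L + n ≤ T)
    (hexc : ∀ v : Fin (L + n) × Fin q → ℝ,
      (∀ j, j ≤ T - (L + n) → ∑ r : Fin (L + n) × Fin q, v r * Ud ((r.1 : ℕ) + j) r.2 = 0) →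
        v = 0)
    (ξ : Fin L × Fin q → ℝ) (η : Fin n → ℝ)
    (hker : ∀ j, j ≤ T - L →
      (∑ r : Fin L × Fin q, ξ r * Ud ((r.1 : ℕ) + j) r.2) + η ⬝ᵥ Xd j = 0) :
    ξ = 0 ∧ η = 0 := by
  classical
  set c : ℕ → ℝ := fun k => A.charpoly.coeff k with hc
  have hcn : c n = 1 := by
    have h1 := (Matrix.charpoly_monic A).coeff_natDegree
    rwa [Matrix.charpoly_natDegree_eq_dim, Fintype.card_fin] at h1
  have hch : ∑ k ∈ range (n + 1), c k • A ^ k = 0 := by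
    have h1 := Matrix.aeval_self_charpoly A
    rw [Polynomial.aeval_eq_sum_range] at h1
    rw [Matrix.charpoly_natDegree_eq_dim, Fintype.card_fin] at h1
    exact h1
  -- Step 1: the effect of θ_k on each Hankel column
  have hstep1 : ∀ k ≤ n, ∀ j, j ≤ T - (L + n) →
      ∑ b ∈ range (L + n), ∑ s, thetaK A B ξ η k b s * Ud (b + j) s
        = -(η ⬝ᵥ (A ^ k *ᵥ Xd j)) := by
    intro k hk j hj
    have hjk : j + k ≤ T - L := by omega
    have hsplit : ∑ b ∈ range (L + n), ∑ s, thetaK A B ξ η k b s * Ud (b + j) s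
        = (∑ b ∈ range k, ∑ s, thetaK A B ξ η k b s * Ud (b + j) s)
          + ∑ b ∈ Ico k (L + n), ∑ s, thetaK A B ξ η k b s * Ud (b + j) s := by
      rw [range_eq_Ico, ← Finset.sum_Ico_consecutive _ (Nat.zero_le k) (by omega : k ≤ L + n),
        ← range_eq_Ico]
    -- Part A : b < k
    have hA : ∑ b ∈ range k, ∑ s, thetaK A B ξ η k b s * Ud (b + j) s
        = η ⬝ᵥ (Xd (j + k) - A ^ k *ᵥ Xd j) := by
      have hXjk := state_reach A B T Xd Ud hrec k j (by omega)
      have h1 : ∀ b ∈ range k, ∑ s, thetaK A B ξ η k b s * Ud (b + j) s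
          = η ⬝ᵥ ((A ^ (k - 1 - b) * B) *ᵥ Ud (j + b)) := by
        intro b hb
        simp only [Finset.mem_range] at hb
        rw [Matrix.dotProduct_mulVec]
        simp only [thetaK, if_pos hb, dotProduct]
        rw [Nat.add_comm j b]
      rw [Finset.sum_congr rfl h1, ← dot_sum']
      congr 1
      rw [hXjk]
      abel
    -- Part B : b ≥ k
    have hB : ∑ b ∈ Ico k (L + n), ∑ s, thetaK A B ξ η k b s * Ud (b + j) s
        = -(η ⬝ᵥ Xd (j + k)) := by
      rw [Finset.sum_Ico_eq_sum_range]
      have h1 : ∀ m ∈ range (L + n - k), ∑ s, thetaK A B ξ η k (k + m) s * Ud ((k + m) + j) s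
          = if h : m < L then ∑ s, ξ (⟨m, h⟩, s) * Ud (m + (j + k)) s else 0 := by
        intro m hm
        have hidx : k + m + j = m + (j + k) := by omega
        by_cases hmL : m < L
        · rw [dif_pos hmL]
          apply Finset.sum_congr rfl
          intro s _
          have ht : thetaK A B ξ η k (k + m) s = ξ (⟨m, hmL⟩, s) := by
            simp only [thetaK]
            rw [if_neg (by omega)]
            have hbk : k + m - k = m := by omega
            simp only [hbk]
            rw [dif_pos hmL]
          rw [ht, hidx]
        · rw [dif_neg hmL]
          apply Finset.sum_eq_zero
          intro s _
          have ht : thetaK A B ξ η k (k + m) s = 0 := by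
            simp only [thetaK]
            rw [if_neg (by omega)]
            have hbk : k + m - k = m := by omega
            simp only [hbk]
            rw [dif_neg hmL]
          rw [ht, zero_mul]
      rw [Finset.sum_congr rfl h1]
      have hsplit2 : ∑ m ∈ range (L + n - k),
            (if h : m < L then ∑ s, ξ (⟨m, h⟩, s) * Ud (m + (j + k)) s else 0)
          = ∑ m ∈ range L,
            (if h : m < L then ∑ s, ξ (⟨m, h⟩, s) * Ud (m + (j + k)) s else 0) := by
        refine (Finset.sum_subset (Finset.range_subset_range.mpr (by omega)) ?_).symm
        intro x hx hnx
        simp only [Finset.mem_range] at hx hnx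
        rw [dif_neg (by omega)]
      rw [hsplit2]
      have hker' := hker (j + k) hjk
      rw [fin_prod_sum_eq ξ (fun b s => Ud (b + (j + k)) s)] at hker'
      linarith
    rw [hsplit, hA, hB, dotProduct_sub]
    ring
  -- Step 2: θ kills all Hankel columns, hence θ = 0
  set θ : Fin (L + n) × Fin q → ℝ :=
    fun r => ∑ k ∈ range (n + 1), c k * thetaK A B ξ η k (r.1 : ℕ) r.2 with hθdef
  have hθ : θ = 0 := by
    apply hexc
    intro j hj
    rw [fin_prod_sum_eq θ (fun b s => Ud (b + j) s)]
    have e1 : ∀ b ∈ range (L + n),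
        (if h : b < L + n then ∑ s, θ (⟨b, h⟩, s) * Ud (b + j) s else 0)
          = ∑ k ∈ range (n + 1), c k * ∑ s, thetaK A B ξ η k b s * Ud (b + j) s := by
      intro b hb
      simp only [Finset.mem_range] at hb
      rw [dif_pos hb]
      simp only [hθdef, Finset.sum_mul, mul_assoc]
      rw [Finset.sum_comm]
      simp only [Finset.mul_sum]
    rw [Finset.sum_congr rfl e1, Finset.sum_comm]
    have e2 : ∀ k ∈ range (n + 1),
        ∑ b ∈ range (L + n), c k * ∑ s, thetaK A B ξ η k b s * Ud (b + j) s
          = c k * -(η ⬝ᵥ (A ^ k *ᵥ Xd j)) := by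
      intro k hk
      simp only [Finset.mem_range] at hk
      rw [← Finset.mul_sum, hstep1 k (by omega) j hj]
    rw [Finset.sum_congr rfl e2]
    have e3 : ∑ k ∈ range (n + 1), c k * -(η ⬝ᵥ (A ^ k *ᵥ Xd j))
        = -(η ⬝ᵥ ((∑ k ∈ range (n + 1), c k • A ^ k) *ᵥ Xd j)) := by
      rw [sum_mulVec', dot_sum']
      rw [← Finset.sum_neg_distrib]
      apply Finset.sum_congr rfl
      intro k _
      rw [Matrix.smul_mulVec, dotProduct_smul]
      simp [mul_comm]
    rw [e3, hch]
    simp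
  have hθ0 : ∀ (b : ℕ) (hb : b < L + n) (s : Fin q),
      ∑ k ∈ range (n + 1), c k * thetaK A B ξ η k b s = 0 := by
    intro b hb s
    have := congrFun hθ (⟨b, hb⟩, s)
    simpa [hθdef] using this
  -- Step 3: ξ = 0 by downward induction
  have hxi : ∀ m : ℕ, ∀ (i : ℕ) (hi : i < L) (s : Fin q), L ≤ i + m → ξ (⟨i, hi⟩, s) = 0 := by
    intro m
    induction m with
    | zero => intro i hi s h; omega
    | succ m ih =>
      intro i hi s hLe
      have heq := hθ0 (i + n) (by omega) s
      rw [Finset.sum_range_succ] at heq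
      have hz : ∑ k ∈ range n, c k * thetaK A B ξ η k (i + n) s = 0 := by
        apply Finset.sum_eq_zero
        intro k hk
        simp only [Finset.mem_range] at hk
        have ht : thetaK A B ξ η k (i + n) s = 0 := by
          simp only [thetaK]
          rw [if_neg (by omega)]
          by_cases h2 : i + n - k < L
          · rw [dif_pos h2]
            exact ih (i + n - k) h2 s (by omega)
          · rw [dif_neg h2]
        rw [ht, mul_zero]
      rw [hz, zero_add, hcn, one_mul] at heq
      have ht : thetaK A B ξ η n (i + n) s = ξ (⟨i, hi⟩, s) := by
        simp only [thetaK]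
        rw [if_neg (by omega)]
        have hbk : i + n - n = i := by omega
        simp only [hbk]
        rw [dif_pos hi]
      rwa [ht] at heq
  have hxi0 : ξ = 0 := by
    funext r
    have := hxi L (r.1 : ℕ) r.1.isLt r.2 (by omega)
    simpa using this
  refine ⟨hxi0, ?_⟩
  -- Step 4: η = 0 via controllability
  have heta : ∀ m : ℕ, m < n → ∀ s : Fin q, (η ᵥ* (A ^ m * B)) s = 0 := by
    intro m
    induction m using Nat.strong_induction_on with
    | _ m ihm =>
      intro hm s
      have heq := hθ0 (n - 1 - m) (by omega) s
      rw [Finset.sum_range_succ] at heq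
      have hz : ∑ k ∈ range n, c k * thetaK A B ξ η k (n - 1 - m) s = 0 := by
        apply Finset.sum_eq_zero
        intro k hk
        simp only [Finset.mem_range] at hk
        have ht : thetaK A B ξ η k (n - 1 - m) s = 0 := by
          simp only [thetaK]
          by_cases hbk : n - 1 - m < k
          · rw [if_pos hbk]
            have hpw : k - 1 - (n - 1 - m) = k + m - n := by omega
            rw [hpw]
            exact ihm (k + m - n) (by omega) (by omega) s
          · rw [if_neg hbk]
            by_cases h2 : n - 1 - m - k < L
            · rw [dif_pos h2, hxi0]; rfl
            · rw [dif_neg h2]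
        rw [ht, mul_zero]
      rw [hz, zero_add, hcn, one_mul] at heq
      have ht : thetaK A B ξ η n (n - 1 - m) s = (η ᵥ* (A ^ m * B)) s := by
        simp only [thetaK]
        rw [if_pos (by omega)]
        have hpw : n - 1 - (n - 1 - m) = m := by omega
        rw [hpw]
      rwa [ht] at heq
  have hvm : η ᵥ* ctrbMat A B = 0 := by
    funext p
    have := heta (p.1 : ℕ) p.1.isLt p.2
    simp only [Matrix.vecMul, dotProduct, ctrbMat, Matrix.of_apply] at this ⊢
    simpa using this
  have := aux_vecMul_inj (ctrbMat A B) (by simpa [Fintype.card_fin, Controllable] using hctrb) η hvm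
  exact this

lemma mulVec_sum_smul {ι : Type} [Fintype ι] {m k : ℕ} (M : Matrix (Fin m) (Fin k) ℝ)
    (g : ι → ℝ) (v : ι → Fin k → ℝ) :
    ∑ c, g c • (M *ᵥ v c) = M *ᵥ (∑ c, g c • v c) := by
  have h := map_sum (M.mulVecLin) (fun c => g c • v c) Finset.univ
  simp only [_root_.map_smul, Matrix.mulVecLin_apply] at h
  exact h.symm

/-- Willems' fundamental lemma, Hankel matrix version.
If `(A, B)` is controllable, `(u^d, y^d)` is a length-`T` trajectory of the system,
`1 ≤ L`, `L + n ≤ T`, and `u^d` is Hankel exciting of order `L + n`, then every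
length-`L` trajectory `(u, y)` of the system can be constructed as
`𝓗_L(u^d) g = col(u)`, `𝓗_L(y^d) g = col(y)` for some `g ∈ ℝ^{T−L+1}`. -/
theorem stmt0 {n q p T : ℕ}
    (A : Matrix (Fin n) (Fin n) ℝ) (B : Matrix (Fin n) (Fin q) ℝ)
    (C : Matrix (Fin p) (Fin n) ℝ)
    (hctrb : Controllable A B)
    (ud : Fin T → Fin q → ℝ) (yd : Fin T → Fin p → ℝ)
    (hd : IsTraj A B C T ud yd)
    (L : ℕ) (hL : 1 ≤ L) (hLT : L + n ≤ T)
    (hexc : HankelExciting T ud (L + n)) :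
    ∀ (u : Fin L → Fin q → ℝ) (y : Fin L → Fin p → ℝ),
      IsTraj A B C L u y →
      ∃ g : Fin (T - L + 1) → ℝ,
        hankelMat T ud L *ᵥ g = colVec u ∧ hankelMat T yd L *ᵥ g = colVec y := by
  intro u y hu
  classical
  obtain ⟨xd, hxd⟩ := hd
  obtain ⟨xt, hxt⟩ := hu
  set Ud : ℕ → Fin q → ℝ := fun j => if h : j < T then ud ⟨j, h⟩ else 0 with hUd
  set Xd : ℕ → Fin n → ℝ := fun j => if h : j < T + 1 then xd ⟨j, h⟩ else 0 with hXd
  set Ut : ℕ → Fin q → ℝ := fun j => if h : j < L then u ⟨j, h⟩ else 0 with hUt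
  set Xt : ℕ → Fin n → ℝ := fun j => if h : j < L + 1 then xt ⟨j, h⟩ else 0 with hXt
  have hrecd : ∀ j < T, Xd (j + 1) = A *ᵥ Xd j + B *ᵥ Ud j := by
    intro j hj
    have h1 := (hxd ⟨j, hj⟩).1
    rw [Fin.succ_mk, Fin.castSucc_mk] at h1
    simp only [hXd, hUd, dif_pos (by omega : j + 1 < T + 1), dif_pos (by omega : j < T + 1),
      dif_pos hj]
    exact h1
  have houtd : ∀ (j : ℕ) (hj : j < T), yd ⟨j, hj⟩ = C *ᵥ Xd j := by
    intro j hj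
    have h1 := (hxd ⟨j, hj⟩).2
    rw [Fin.castSucc_mk] at h1
    simp only [hXd, dif_pos (by omega : j < T + 1)]
    exact h1
  have hrect : ∀ j < L, Xt (j + 1) = A *ᵥ Xt j + B *ᵥ Ut j := by
    intro j hj
    have h1 := (hxt ⟨j, hj⟩).1
    rw [Fin.succ_mk, Fin.castSucc_mk] at h1
    simp only [hXt, hUt, dif_pos (by omega : j + 1 < L + 1), dif_pos (by omega : j < L + 1),
      dif_pos hj]
    exact h1
  have houtt : ∀ (j : ℕ) (hj : j < L), y ⟨j, hj⟩ = C *ᵥ Xt j := by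
    intro j hj
    have h1 := (hxt ⟨j, hj⟩).2
    rw [Fin.castSucc_mk] at h1
    simp only [hXt, dif_pos (by omega : j < L + 1)]
    exact h1
  have hHud : ∀ (k : ℕ) (r : Fin k × Fin q) (c : Fin (T - k + 1)), k ≤ T →
      hankelMat T ud k r c = Ud ((r.1 : ℕ) + (c : ℕ)) r.2 := by
    intro k r c hk
    have hr := r.1.isLt
    have hc := c.isLt
    have hlt : (r.1 : ℕ) + (c : ℕ) < T := by omega
    simp only [hankelMat, dif_pos hlt, hUd]
  have hexc' : ∀ v : (Fin (L + n) × Fin q) → ℝ, v ᵥ* hankelMat T ud (L + n) = 0 → v = 0 := by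
    apply aux_vecMul_inj
    rw [HankelExciting] at hexc
    simp only [Fintype.card_prod, Fintype.card_fin]
    rw [hexc]; ring
  have hexcN : ∀ v : Fin (L + n) × Fin q → ℝ,
      (∀ j, j ≤ T - (L + n) → ∑ r : Fin (L + n) × Fin q, v r * Ud ((r.1 : ℕ) + j) r.2 = 0) →
        v = 0 := by
    intro v hv
    apply hexc'
    funext col
    simp only [Matrix.vecMul, dotProduct, Pi.zero_apply]
    have hcol : (col : ℕ) ≤ T - (L + n) := by have := col.isLt; omega
    have h0 := hv (col : ℕ) hcol
    rw [← h0]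
    apply Finset.sum_congr rfl
    intro r _
    rw [hHud (L + n) r col (by omega)]
  set M : Matrix ((Fin L × Fin q) ⊕ Fin n) (Fin (T - L + 1)) ℝ :=
    Matrix.of (fun r c =>
      Sum.elim (fun rl => hankelMat T ud L rl c) (fun i => Xd (c : ℕ) i) r) with hM
  have hMker : ∀ w : (Fin L × Fin q) ⊕ Fin n → ℝ, w ᵥ* M = 0 → w = 0 := by
    intro w hw
    have hk := kernel_triv A B hctrb T Xd Ud hrecd L hL hLT hexcN
      (fun r => w (Sum.inl r)) (fun i => w (Sum.inr i)) ?_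
    · funext r
      cases r with
      | inl rl => exact congrFun hk.1 rl
      | inr i => exact congrFun hk.2 i
    · intro j hj
      have hcol := congrFun hw ⟨j, by omega⟩
      simp only [Matrix.vecMul, dotProduct, Pi.zero_apply] at hcol
      rw [Fintype.sum_sum_type] at hcol
      rw [← hcol]
      congr 1
      apply Finset.sum_congr rfl
      intro r _
      simp only [hM, Matrix.of_apply, Sum.elim_inl]
      rw [hHud L r ⟨j, by omega⟩ (by omega)]
  obtain ⟨g, hg⟩ := aux_surj M hMker (Sum.elim (colVec u) (Xt 0))
  have hgu : hankelMat T ud L *ᵥ g = colVec u := by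
    funext r
    have h1 := congrFun hg (Sum.inl r)
    simpa [hM, Matrix.mulVec, dotProduct] using h1
  have hgX : ∀ i, ∑ c : Fin (T - L + 1), Xd (c : ℕ) i * g c = Xt 0 i := by
    intro i
    have h1 := congrFun hg (Sum.inr i)
    simpa [hM, Matrix.mulVec, dotProduct] using h1
  refine ⟨g, hgu, ?_⟩
  -- each row-block of the input Hankel product recovers u
  have hurow : ∀ (m : ℕ), m < L → ∑ c, g c • Ud ((c : ℕ) + m) = Ut m := by
    intro m hm
    funext s'
    have h1 := congrFun hgu (⟨m, hm⟩, s')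
    simp only [Matrix.mulVec, dotProduct] at h1
    have h2 : ∀ c : Fin (T - L + 1),
        hankelMat T ud L (⟨m, hm⟩, s') c = Ud (m + (c : ℕ)) s' := fun c =>
      hHud L (⟨m, hm⟩, s') c (by omega)
    simp only [h2] at h1
    simp only [Finset.sum_apply, Pi.smul_apply, smul_eq_mul]
    rw [show (∑ c : Fin (T - L + 1), g c * Ud ((c : ℕ) + m) s')
        = ∑ c : Fin (T - L + 1), Ud (m + (c : ℕ)) s' * g c by
      apply Finset.sum_congr rfl; intro c _; rw [Nat.add_comm]; ring]
    rw [h1]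
    simp only [colVec, hUt, dif_pos hm]
  have hXt0 : ∑ c, g c • Xd (c : ℕ) = Xt 0 := by
    funext i
    simp only [Finset.sum_apply, Pi.smul_apply, smul_eq_mul]
    rw [← hgX i]
    apply Finset.sum_congr rfl
    intro c _
    ring
  -- the output identity
  funext r
  obtain ⟨i, s⟩ := r
  have hiL : (i : ℕ) < L := i.isLt
  have key : ∑ c, g c • (C *ᵥ Xd ((c : ℕ) + (i : ℕ))) = C *ᵥ Xt ((0 : ℕ) + (i : ℕ)) := by
    have e1 : ∀ c : Fin (T - L + 1), C *ᵥ Xd ((c : ℕ) + (i : ℕ))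
        = (C * A ^ (i : ℕ)) *ᵥ Xd (c : ℕ)
          + ∑ m ∈ Finset.range (i : ℕ),
              (C * (A ^ ((i : ℕ) - 1 - m) * B)) *ᵥ Ud ((c : ℕ) + m) := by
      intro c
      have hc := c.isLt
      rw [state_reach A B T Xd Ud hrecd (i : ℕ) (c : ℕ) (by omega)]
      rw [Matrix.mulVec_add]
      congr 1
      · rw [Matrix.mulVec_mulVec]
      · have hms := map_sum (C.mulVecLin)
          (fun m => (A ^ ((i : ℕ) - 1 - m) * B) *ᵥ Ud ((c : ℕ) + m)) (Finset.range (i : ℕ))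
        simp only [Matrix.mulVecLin_apply] at hms
        rw [hms]
        apply Finset.sum_congr rfl
        intro m _
        rw [Matrix.mulVec_mulVec]
    calc ∑ c, g c • (C *ᵥ Xd ((c : ℕ) + (i : ℕ)))
        = ∑ c, (g c • ((C * A ^ (i : ℕ)) *ᵥ Xd (c : ℕ))
            + g c • ∑ m ∈ Finset.range (i : ℕ),
                (C * (A ^ ((i : ℕ) - 1 - m) * B)) *ᵥ Ud ((c : ℕ) + m)) := by
          apply Finset.sum_congr rfl
          intro c _
          rw [e1 c, smul_add]
      _ = (∑ c, g c • ((C * A ^ (i : ℕ)) *ᵥ Xd (c : ℕ)))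
            + ∑ m ∈ Finset.range (i : ℕ), ∑ c, g c •
                ((C * (A ^ ((i : ℕ) - 1 - m) * B)) *ᵥ Ud ((c : ℕ) + m)) := by
          rw [Finset.sum_add_distrib]
          congr 1
          rw [Finset.sum_comm]
          apply Finset.sum_congr rfl
          intro c _
          rw [Finset.smul_sum]
      _ = (C * A ^ (i : ℕ)) *ᵥ Xt 0
            + ∑ m ∈ Finset.range (i : ℕ),
                (C * (A ^ ((i : ℕ) - 1 - m) * B)) *ᵥ Ut m := by
          congr 1
          · rw [mulVec_sum_smul, hXt0]
          · apply Finset.sum_congr rfl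
            intro m hm
            simp only [Finset.mem_range] at hm
            rw [mulVec_sum_smul, hurow m (by omega)]
      _ = C *ᵥ Xt ((0 : ℕ) + (i : ℕ)) := by
          rw [state_reach A B L Xt Ut hrect (i : ℕ) 0 (by omega)]
          rw [Matrix.mulVec_add, Matrix.mulVec_mulVec]
          congr 1
          have hms := map_sum (C.mulVecLin)
            (fun m => (A ^ ((i : ℕ) - 1 - m) * B) *ᵥ Ut (0 + m)) (Finset.range (i : ℕ))
          simp only [Matrix.mulVecLin_apply] at hms
          rw [hms]
          apply Finset.sum_congr rfl
          intro m _
          rw [Matrix.mulVec_mulVec, Nat.zero_add]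
  have lhs_eq : (hankelMat T yd L *ᵥ g) (i, s)
      = ∑ c : Fin (T - L + 1), (C *ᵥ Xd ((c : ℕ) + (i : ℕ))) s * g c := by
    simp only [Matrix.mulVec, dotProduct]
    apply Finset.sum_congr rfl
    intro c _
    have hc := c.isLt
    have hlt : (i : ℕ) + (c : ℕ) < T := by omega
    simp only [hankelMat, dif_pos hlt]
    rw [houtd ((i : ℕ) + (c : ℕ)) hlt, Nat.add_comm]
    rfl
  rw [lhs_eq]
  have : ∑ c : Fin (T - L + 1), (C *ᵥ Xd ((c : ℕ) + (i : ℕ))) s * g c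
      = (∑ c : Fin (T - L + 1), g c • (C *ᵥ Xd ((c : ℕ) + (i : ℕ)))) s := by
    simp only [Finset.sum_apply, Pi.smul_apply, smul_eq_mul]
    apply Finset.sum_congr rfl
    intro c _
    ring
  rw [this, key, Nat.zero_add]
  simp only [hXt, dif_pos (by omega : (i : ℕ) < L + 1)]
  have := houtt (i : ℕ) hiL
  simp only [hXt, dif_pos (by omega : (i : ℕ) < L + 1)] at this
  rw [colVec]
  conv_lhs => rw [← this]
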